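/- Let c = 1/√3. The sequence a(n) = ⌊cn + d⌋ satisfies a(a(a(n) + a(n-1) + a(n-2))) = a(n) for all n ≥ 3 if and only if d ∈ [(√3+3)/6, (5√3-3)/6]. -/

import Mathlib

open Real



private lemma sqrt3_sq : Real.sqrt 3 * Real.sqrt 3 = 3 := Real.mul_self_sqrt (by norm_num)

private lemma sqrt3_gt : 1.732 < Real.sqrt 3 := by
  nlinarith [sqrt3_sq, Real.sqrt_nonneg 3]

private lemma sqrt3_lt : Real.sqrt 3 < 1.7321 := by
  nlinarith [sqrt3_sq, Real.sqrt_nonneg 3]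

private lemma irr_sqrt3 : Irrational (Real.sqrt 3) := by
  exact_mod_cast (Nat.prime_three).irrational_sqrt

noncomputable def Kk (c d x : ℝ) : ℤ :=
  ⌊(Real.sqrt 3 + 1) * d - Real.sqrt 3 * x + c * (((⌊x + c⌋ : ℤ) : ℝ) + ((⌊x + 2*c⌋ : ℤ) : ℝ))⌋

private lemma cfacts (c : ℝ) (hc : c = 1 / Real.sqrt 3) :
    Real.sqrt 3 * c = 1 ∧ 3 * c = Real.sqrt 3 ∧ 0.577 < c ∧ c < 0.5774 := by
  have hs := sqrt3_sq
  have h1 : Real.sqrt 3 * c = 1 := by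
    rw [hc]; field_simp
  have h2 : 3 * c = Real.sqrt 3 := by
    linear_combination Real.sqrt 3 * h1 - c * hs
  refine ⟨h1, h2, ?_, ?_⟩
  · nlinarith [sqrt3_lt, sqrt3_gt]
  · nlinarith [sqrt3_lt, sqrt3_gt]

private lemma reduce (c : ℝ) (hc : c = 1 / Real.sqrt 3) (d : ℝ) (a : ℤ → ℤ)
    (ha : ∀ n : ℤ, a n = ⌊c * n + d⌋) (n : ℤ) :
    (a (a (a n + a (n - 1) + a (n - 2))) = a n) ↔
      ⌊Int.fract (c * (n - 2) + d) + c * (Kk c d (Int.fract (c * (n - 2) + d)))⌋ =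
        ⌊Int.fract (c * (n - 2) + d) + 2 * c⌋ := by
  obtain ⟨h1, h2, hcl, hcu⟩ := cfacts c hc
  have hs := sqrt3_sq
  set x := Int.fract (c * (n - 2) + d) with hxdef
  set b := ⌊c * ((n : ℝ) - 2) + d⌋ with hbdef
  have hxb : (b : ℝ) = c * ((n : ℝ) - 2) + d - x := by
    have := Int.self_sub_fract (c * ((n : ℝ) - 2) + d)
    rw [hxdef, hbdef]; linarith
  have han2 : a (n - 2) = b := by
    rw [ha (n - 2), hbdef]; push_cast; ring_nf
  have han1 : a (n - 1) = b + ⌊x + c⌋ := by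
    rw [ha (n - 1)]
    have e : c * ((n : ℤ) - 1 : ℤ) + d = (b : ℝ) + (x + c) := by
      push_cast; rw [hxb]; ring
    rw [e, Int.floor_intCast_add]
  have han : a n = b + ⌊x + 2 * c⌋ := by
    rw [ha n]
    have e : c * (n : ℝ) + d = (b : ℝ) + (x + 2 * c) := by
      rw [hxb]; ring
    rw [e, Int.floor_intCast_add]
  set w : ℤ := ⌊x + c⌋ + ⌊x + 2 * c⌋ with hwdef
  have hsum : a n + a (n - 1) + a (n - 2) = 3 * b + w := by
    rw [han, han1, han2, hwdef]; ring
  have has : a (3 * b + w) = (n - 2) + Kk c d x := by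
    rw [ha (3 * b + w)]
    have e : c * ((3 * b + w : ℤ) : ℝ) + d =
        ((n - 2 : ℤ) : ℝ) + ((Real.sqrt 3 + 1) * d - Real.sqrt 3 * x
          + c * (((⌊x + c⌋ : ℤ) : ℝ) + ((⌊x + 2*c⌋ : ℤ) : ℝ))) := by
      push_cast [hwdef]
      rw [hxb]
      have hcc : 3 * (c * c) = 1 := by nlinarith [h1, h2]
      linear_combination ((n : ℝ) - 2) * hcc + (d - x) * h2
    rw [e, Int.floor_intCast_add, Kk]
  have hfin : a ((n - 2) + Kk c d x) = b + ⌊x + c * (Kk c d x)⌋ := by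
    rw [ha _]
    have e : c * (((n - 2) + Kk c d x : ℤ) : ℝ) + d = (b : ℝ) + (x + c * (Kk c d x)) := by
      push_cast; rw [hxb]; ring
    rw [e, Int.floor_intCast_add]
  rw [hsum, has, hfin, han]
  constructor <;> intro h' <;> omega

set_option maxHeartbeats 1000000 in
private lemma Pholds (c : ℝ) (hc : c = 1 / Real.sqrt 3) (d : ℝ)
    (hd1 : (Real.sqrt 3 + 3) / 6 ≤ d) (hd2 : d ≤ (5 * Real.sqrt 3 - 3) / 6)
    (x : ℝ) (hx0 : 0 ≤ x) (hx1 : x < 1)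
    (hexc : ¬(x = 1 - c ∧ d = (5 * Real.sqrt 3 - 3) / 6)) :
    ⌊x + c * (Kk c d x)⌋ = ⌊x + 2 * c⌋ := by
  obtain ⟨h1, h2, hcl, hcu⟩ := cfacts c hc
  have hs := sqrt3_sq
  have hsl := sqrt3_gt
  have hsu := sqrt3_lt
  have hsp : (0:ℝ) < Real.sqrt 3 := by linarith
  have hD1 : 1 + 2/3 * Real.sqrt 3 ≤ (Real.sqrt 3 + 1) * d := by nlinarith
  have hD2 : (Real.sqrt 3 + 1) * d ≤ 2 + 1/3 * Real.sqrt 3 := by nlinarith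
  rcases lt_or_ge x (1 - c) with hA | hBC
  · -- region A : x < 1 - c
    have hfc : ⌊x + c⌋ = (0:ℤ) := by
      rw [Int.floor_eq_iff] <;> constructor <;> push_cast <;> linarith
    have hf2c : ⌊x + 2*c⌋ = (1:ℤ) := by
      rw [Int.floor_eq_iff] <;> constructor <;> push_cast <;> linarith
    have hKval : Kk c d x = ⌊(Real.sqrt 3 + 1) * d - Real.sqrt 3 * x + c⌋ := by
      rw [Kk, hfc, hf2c]; congr 1; push_cast; ring
    have hx3 : Real.sqrt 3 * x < Real.sqrt 3 - 1 := by
      nlinarith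
    have hK2 : 2 ≤ Kk c d x := by
      rw [hKval]
      apply Int.le_floor.mpr
      push_cast
      linarith
    have hK3 : Kk c d x ≤ 3 := by
      have hxn : 0 ≤ Real.sqrt 3 * x := mul_nonneg hsp.le hx0
      have h4 : (Real.sqrt 3 + 1) * d - Real.sqrt 3 * x + c < ((4:ℤ):ℝ) := by
        push_cast
        linarith
      have := Int.floor_lt.mpr h4
      omega
    have : Kk c d x = 2 ∨ Kk c d x = 3 := by omega
    rcases this with hk | hk
    · rw [hk, hf2c]
      rw [Int.floor_eq_iff] <;> constructor <;> push_cast <;> linarith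
    · rw [hk, hf2c]
      have hE3 : ((3:ℤ):ℝ) ≤ (Real.sqrt 3 + 1) * d - Real.sqrt 3 * x + c := by
        apply Int.le_floor.mp; rw [← hKval, hk]
      push_cast at hE3
      have hxm : 1.732 * x ≤ Real.sqrt 3 * x := mul_le_mul_of_nonneg_right hsl.le hx0
      have hxs : x < 0.1 := by linarith
      rw [Int.floor_eq_iff] <;> constructor <;> push_cast <;> linarith
  · rcases lt_or_ge x (2 - 2*c) with hB | hC
    · -- region B : 1 - c ≤ x < 2 - 2c
      have hfc : ⌊x + c⌋ = (1:ℤ) := by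
        rw [Int.floor_eq_iff] <;> constructor <;> push_cast <;> linarith
      have hf2c : ⌊x + 2*c⌋ = (1:ℤ) := by
        rw [Int.floor_eq_iff] <;> constructor <;> push_cast <;> linarith
      have hKval : Kk c d x = ⌊(Real.sqrt 3 + 1) * d - Real.sqrt 3 * x + 2*c⌋ := by
        rw [Kk, hfc, hf2c]; congr 1; push_cast; ring
      have hx3 : Real.sqrt 3 * x < 2*Real.sqrt 3 - 2 := by nlinarith
      have hx3' : Real.sqrt 3 - 1 ≤ Real.sqrt 3 * x := by nlinarith
      have hK1 : 1 ≤ Kk c d x := by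
        rw [hKval]; apply Int.le_floor.mpr; push_cast; linarith
      have hE3 : (Real.sqrt 3 + 1) * d - Real.sqrt 3 * x + 2*c ≤ 3 := by linarith
      have hK3 : Kk c d x ≤ 3 := by
        rw [hKval]
        have := Int.floor_le_floor (R := ℝ) hE3
        simpa using this
      have : Kk c d x = 1 ∨ Kk c d x = 2 ∨ Kk c d x = 3 := by omega
      rcases this with hk | hk | hk
      · rw [hk, hf2c]
        rw [Int.floor_eq_iff] <;> constructor <;> push_cast <;> linarith
      · rw [hk, hf2c]
        rw [Int.floor_eq_iff] <;> constructor <;> push_cast <;> linarith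
      · exfalso
        have hE3' : ((3:ℤ):ℝ) ≤ (Real.sqrt 3 + 1) * d - Real.sqrt 3 * x + 2*c := by
          apply Int.le_floor.mp; rw [← hKval, hk]
        push_cast at hE3'
        have e1 : (Real.sqrt 3 + 1) * d = 2 + 1/3 * Real.sqrt 3 := by linarith
        have e2 : Real.sqrt 3 * x = Real.sqrt 3 - 1 := by linarith
        have ex : x = 1 - c := by
          rw [hc]
          field_simp
          linear_combination e2
        have ed : d = (5 * Real.sqrt 3 - 3) / 6 := by
          have h6 : (Real.sqrt 3 + 1) * d = (Real.sqrt 3 + 1) * ((5 * Real.sqrt 3 - 3) / 6) := by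
            rw [e1]; linear_combination (-5/6) * hs
          exact mul_left_cancel₀ (by linarith) h6
        exact hexc ⟨ex, ed⟩
    · -- region C : 2 - 2c ≤ x < 1
      have hfc : ⌊x + c⌋ = (1:ℤ) := by
        rw [Int.floor_eq_iff] <;> constructor <;> push_cast <;> linarith
      have hf2c : ⌊x + 2*c⌋ = (2:ℤ) := by
        rw [Int.floor_eq_iff] <;> constructor <;> push_cast <;> linarith
      have hKval : Kk c d x = ⌊(Real.sqrt 3 + 1) * d - Real.sqrt 3 * x + 3*c⌋ := by
        rw [Kk, hfc, hf2c]; congr 1; push_cast; ring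
      have hx3 : Real.sqrt 3 * x < Real.sqrt 3 := by nlinarith
      have hx3' : 2*Real.sqrt 3 - 2 ≤ Real.sqrt 3 * x := by nlinarith
      have hk : Kk c d x = 2 := by
        rw [hKval, Int.floor_eq_iff] <;> constructor <;> push_cast <;> linarith
      rw [hk, hf2c]
      rw [Int.floor_eq_iff] <;> constructor <;> push_cast <;> linarith

private lemma Pfail_low (c : ℝ) (hc : c = 1 / Real.sqrt 3) (d : ℝ)
    (x : ℝ) (hx0 : 0 ≤ x)
    (hxE : ((Real.sqrt 3 + 1) * d + c - 2) / Real.sqrt 3 < x) (hx2 : x < 1 - c) :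
    ⌊x + c * (Kk c d x)⌋ ≠ ⌊x + 2 * c⌋ := by
  obtain ⟨h1, h2, hcl, hcu⟩ := cfacts c hc
  have hs := sqrt3_sq
  have hsl := sqrt3_gt
  have hsu := sqrt3_lt
  have hsp : (0:ℝ) < Real.sqrt 3 := by linarith
  have hfc : ⌊x + c⌋ = (0:ℤ) := by
    rw [Int.floor_eq_iff] <;> constructor <;> push_cast <;> linarith
  have hf2c : ⌊x + 2*c⌋ = (1:ℤ) := by
    rw [Int.floor_eq_iff] <;> constructor <;> push_cast <;> linarith
  have hKval : Kk c d x = ⌊(Real.sqrt 3 + 1) * d - Real.sqrt 3 * x + c⌋ := by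
    rw [Kk, hfc, hf2c]; congr 1; push_cast; ring
  have hE : (Real.sqrt 3 + 1) * d - Real.sqrt 3 * x + c < ((2:ℤ):ℝ) := by
    have := (div_lt_iff₀ hsp).mp hxE
    push_cast
    linarith
  have hK1 : Kk c d x ≤ 1 := by
    rw [hKval]
    have := Int.floor_lt.mpr hE
    omega
  have hmono : x + c * (Kk c d x) ≤ x + c := by
    have : c * (Kk c d x : ℝ) ≤ c * 1 := by
      apply mul_le_mul_of_nonneg_left _ (by linarith)
      exact_mod_cast hK1
    linarith
  have : ⌊x + c * (Kk c d x)⌋ ≤ ⌊x + c⌋ := Int.floor_le_floor hmono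
  rw [hf2c]; omega

private lemma Pfail_high (c : ℝ) (hc : c = 1 / Real.sqrt 3) (d : ℝ)
    (x : ℝ) (hx1 : 1 - c < x) (hx2 : x < 2 - 2*c)
    (hxE : x < ((Real.sqrt 3 + 1) * d + 2*c - 3) / Real.sqrt 3) :
    ⌊x + c * (Kk c d x)⌋ ≠ ⌊x + 2 * c⌋ := by
  obtain ⟨h1, h2, hcl, hcu⟩ := cfacts c hc
  have hs := sqrt3_sq
  have hsl := sqrt3_gt
  have hsu := sqrt3_lt
  have hsp : (0:ℝ) < Real.sqrt 3 := by linarith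
  have hfc : ⌊x + c⌋ = (1:ℤ) := by
    rw [Int.floor_eq_iff] <;> constructor <;> push_cast <;> linarith
  have hf2c : ⌊x + 2*c⌋ = (1:ℤ) := by
    rw [Int.floor_eq_iff] <;> constructor <;> push_cast <;> linarith
  have hKval : Kk c d x = ⌊(Real.sqrt 3 + 1) * d - Real.sqrt 3 * x + 2*c⌋ := by
    rw [Kk, hfc, hf2c]; congr 1; push_cast; ring
  have hE : ((3:ℤ):ℝ) ≤ (Real.sqrt 3 + 1) * d - Real.sqrt 3 * x + 2*c := by
    have := (lt_div_iff₀ hsp).mp hxE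
    push_cast
    linarith
  have hK3 : 3 ≤ Kk c d x := by
    rw [hKval]; exact Int.le_floor.mpr hE
  have hmono : x + 3 * c ≤ x + c * (Kk c d x) := by
    have : c * 3 ≤ c * (Kk c d x : ℝ) := by
      apply mul_le_mul_of_nonneg_left _ (by linarith)
      exact_mod_cast hK3
    linarith
  have h2f : (2:ℤ) ≤ ⌊x + c * (Kk c d x)⌋ := by
    have h2' : ((2:ℤ):ℝ) ≤ x + 3*c := by push_cast; linarith
    exact Int.le_floor.mpr (le_trans h2' hmono)
  rw [hf2c]; omega

private lemma natstep (q : ℝ) (hq0 : 0 ≤ q) : ∃ t : ℕ, q < (t:ℝ) ∧ (t:ℝ) ≤ q + 1 := by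
  have hnn : ((⌊q⌋.toNat : ℤ)) = ⌊q⌋ := Int.toNat_of_nonneg (Int.floor_nonneg.mpr hq0)
  have hcast : ((⌊q⌋.toNat : ℕ) : ℝ) = ((⌊q⌋ : ℤ) : ℝ) := by exact_mod_cast hnn
  refine ⟨⌊q⌋.toNat + 1, ?_, ?_⟩
  · push_cast [hcast]
    exact Int.lt_floor_add_one q
  · push_cast [hcast]
    have := Int.floor_le q
    linarith

private lemma hit {u v : ℝ} (h0 : 0 ≤ u) (h1 : v ≤ 1) (huv : u < v)
    (z s : ℝ) (hs : s ≠ 0) (habs : |s| < v - u) :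
    ∃ t : ℕ, Int.fract (z + t * s) ∈ Set.Ioo u v := by
  rcases hs.lt_or_gt with hneg | hpos
  · -- s < 0
    have habs' : -s < v - u := by rw [abs_of_neg hneg] at habs; linarith
    have hsp : 0 < -s := by linarith
    obtain ⟨J, hJ0, hJz⟩ : ∃ J : ℤ, 0 ≤ J ∧ v - z ≤ (J:ℝ) :=
      ⟨max ⌈v - z⌉ 0, le_max_right _ _,
        le_trans (Int.le_ceil _) (by exact_mod_cast Int.cast_le.mpr (le_max_left _ _))⟩
    have hq0 : 0 ≤ (z - v + J) / (-s) := div_nonneg (by linarith) hsp.le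
    obtain ⟨t, htgt, htle⟩ := natstep _ hq0
    refine ⟨t, ?_⟩
    have key1 : z + t * s < v - J := by
      have h' : ((z - v + J) / (-s)) * (-s) < (t:ℝ) * (-s) :=
        mul_lt_mul_of_pos_right htgt hsp
      rw [div_mul_cancel₀ _ hsp.ne'] at h'
      nlinarith
    have key2 : u - J < z + t * s := by
      have h' : (t:ℝ) * (-s) ≤ ((z - v + J) / (-s) + 1) * (-s) :=
        mul_le_mul_of_nonneg_right htle hsp.le
      rw [add_mul, div_mul_cancel₀ _ hsp.ne'] at h'
      nlinarith
    have hJr : (0:ℝ) ≤ (J:ℝ) := by exact_mod_cast hJ0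
    have hfr : Int.fract (z + t * s) = z + t * s + J := by
      rw [← Int.fract_add_intCast (z + t * s) J]
      exact Int.fract_eq_self.mpr ⟨by linarith, by linarith⟩
    rw [hfr]
    exact ⟨by linarith, by linarith⟩
  · -- s > 0
    have habs' : s < v - u := by rw [abs_of_pos hpos] at habs; linarith
    obtain ⟨J, hJ0, hJz⟩ : ∃ J : ℤ, 0 ≤ J ∧ z - u ≤ (J:ℝ) :=
      ⟨max ⌈z - u⌉ 0, le_max_right _ _,
        le_trans (Int.le_ceil _) (by exact_mod_cast Int.cast_le.mpr (le_max_left _ _))⟩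
    have hq0 : 0 ≤ (u + J - z) / s := div_nonneg (by linarith) hpos.le
    obtain ⟨t, htgt, htle⟩ := natstep _ hq0
    refine ⟨t, ?_⟩
    have key1 : u + J < z + t * s := by
      have h' : ((u + J - z) / s) * s < (t:ℝ) * s :=
        mul_lt_mul_of_pos_right htgt hpos
      rw [div_mul_cancel₀ _ hpos.ne'] at h'
      nlinarith
    have key2 : z + t * s < v + J := by
      have h' : (t:ℝ) * s ≤ ((u + J - z) / s + 1) * s :=
        mul_le_mul_of_nonneg_right htle hpos.le
      rw [add_mul, div_mul_cancel₀ _ hpos.ne'] at h'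
      nlinarith
    have hJr : (0:ℝ) ≤ (J:ℝ) := by exact_mod_cast hJ0
    have hfr : Int.fract (z + t * s) = z + t * s - J := by
      rw [← Int.fract_sub_intCast (z + t * s) J]
      exact Int.fract_eq_self.mpr ⟨by linarith, by linarith⟩
    rw [hfr]
    exact ⟨by linarith, by linarith⟩

private lemma dens (c : ℝ) (hc : c = 1 / Real.sqrt 3) (d : ℝ) {u v : ℝ}
    (h0 : 0 ≤ u) (h1 : v ≤ 1) (huv : u < v) :
    ∃ n : ℤ, 3 ≤ n ∧ Int.fract (c * ((n:ℝ) - 2) + d) ∈ Set.Ioo u v := by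
  obtain ⟨h1c, h2c, hcl, hcu⟩ := cfacts c hc
  have hsl := sqrt3_gt
  have hsp : (0:ℝ) < Real.sqrt 3 := by linarith
  have hvu : 0 < v - u := by linarith
  obtain ⟨N, hN⟩ := exists_nat_gt (1 / (v - u))
  have hNpos : 0 < N + 1 := Nat.succ_pos N
  obtain ⟨j, k, hk0, hkN, hjk⟩ := Real.exists_int_int_abs_mul_sub_le c hNpos
  have hk1 : (1:ℝ) ≤ (k:ℝ) := by exact_mod_cast hk0
  have hsne : (k:ℝ) * c - j ≠ 0 := by
    intro h
    have hj0 : (j:ℝ) ≠ 0 := by nlinarith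
    have key : Real.sqrt 3 * (j:ℝ) = (k:ℝ) := by
      linear_combination (k:ℝ) * h1c - Real.sqrt 3 * h
    refine irr_sqrt3 ⟨(k:ℚ)/(j:ℚ), ?_⟩
    push_cast
    rw [div_eq_iff hj0]
    linarith
  have habs : |(k:ℝ) * c - j| < v - u := by
    have hN0 : (0:ℝ) < N := lt_of_lt_of_le (by positivity) hN.le
    have h2 : 1 < (v - u) * N := by
      rw [div_lt_iff₀ hvu] at hN; linarith
    have h3 : 1 / ((N:ℝ) + 1 + 1) < v - u := by
      rw [div_lt_iff₀ (by linarith)]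
      nlinarith
    calc |(k:ℝ) * c - j| ≤ 1 / ((N + 1 : ℕ) + 1) := hjk
      _ < v - u := by push_cast; push_cast at h3; linarith [h3]
  obtain ⟨t, ht⟩ := hit h0 h1 huv (c + d) ((k:ℝ) * c - j) hsne habs
  refine ⟨3 + t * k, ?_, ?_⟩
  · have : 0 ≤ (t:ℤ) * k := mul_nonneg (Int.ofNat_nonneg t) hk0.le
    linarith
  · have e : c * (((3 + (t:ℤ) * k : ℤ):ℝ) - 2) + d
        = (c + d + (t:ℝ) * ((k:ℝ) * c - j)) + ((t * j : ℤ):ℝ) := by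
      push_cast; ring
    rw [e, Int.fract_add_intCast]
    exact ht


theorem stmt16 (c : ℝ) (hc : c = 1 / Real.sqrt 3) (d : ℝ)
    (a : ℤ → ℤ) (ha : ∀ n : ℤ, a n = ⌊c * n + d⌋) :
    (∀ n : ℤ, 3 ≤ n → a (a (a n + a (n - 1) + a (n - 2))) = a n) ↔
      d ∈ Set.Icc ((Real.sqrt 3 + 3) / 6) ((5 * Real.sqrt 3 - 3) / 6) := by
  obtain ⟨h1c, h2c, hcl, hcu⟩ := cfacts c hc
  have hs := sqrt3_sq
  have hsl := sqrt3_gt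
  have hsu := sqrt3_lt
  have hsp : (0:ℝ) < Real.sqrt 3 := by linarith
  constructor
  · intro h
    rw [Set.mem_Icc]
    constructor
    · by_contra hlt
      push_neg at hlt
      have hDlt : (Real.sqrt 3 + 1) * d < 1 + 2/3 * Real.sqrt 3 := by nlinarith
      have huv : max 0 (((Real.sqrt 3 + 1) * d + c - 2) / Real.sqrt 3) < 1 - c := by
        apply max_lt (by linarith)
        rw [div_lt_iff₀ hsp]
        nlinarith
      obtain ⟨n, hn3, hx⟩ := dens c hc d (le_max_left _ _) (by linarith) huv
      exact Pfail_low c hc d _ ((le_max_left _ _).trans hx.1.le)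
        (lt_of_le_of_lt (le_max_right _ _) hx.1) hx.2
        ((reduce c hc d a ha n).mp (h n hn3))
    · by_contra hlt
      push_neg at hlt
      have hDgt : 2 + 1/3 * Real.sqrt 3 < (Real.sqrt 3 + 1) * d := by nlinarith
      have huv : 1 - c < min (2 - 2*c) (((Real.sqrt 3 + 1) * d + 2*c - 3) / Real.sqrt 3) := by
        apply lt_min (by linarith)
        rw [lt_div_iff₀ hsp]
        nlinarith
      obtain ⟨n, hn3, hx⟩ := dens c hc d (by linarith : (0:ℝ) ≤ 1 - c)
        ((min_le_left _ _).trans (by linarith)) huv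
      exact Pfail_high c hc d _ hx.1 (lt_of_lt_of_le hx.2 (min_le_left _ _))
        (lt_of_lt_of_le hx.2 (min_le_right _ _))
        ((reduce c hc d a ha n).mp (h n hn3))
  · intro hd n _
    rw [Set.mem_Icc] at hd
    rw [reduce c hc d a ha n]
    apply Pholds c hc d hd.1 hd.2 _ (Int.fract_nonneg _) (Int.fract_lt_one _)
    rintro ⟨hxeq, hdeq⟩
    set b := ⌊c * ((n:ℝ) - 2) + d⌋ with hbdef
    have hsf := Int.self_sub_fract (c * ((n:ℝ) - 2) + d)
    rw [hxeq] at hsf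
    have expand : c * ((n:ℝ) - 1) = c * ((n:ℝ) - 2) + c := by ring
    have hint : c * ((n:ℝ) - 1) + d = (b:ℝ) + 1 := by
      rw [expand, hbdef]; linarith
    rw [hdeq] at hint
    have k1 : Real.sqrt 3 * (c * ((n:ℝ) - 1)) = (n:ℝ) - 1 := by
      linear_combination ((n:ℝ) - 1) * h1c
    have e2 : Real.sqrt 3 * (c * ((n:ℝ) - 1) + (5 * Real.sqrt 3 - 3)/6)
        = Real.sqrt 3 * ((b:ℝ) + 1) := by rw [hint]
    have key : Real.sqrt 3 * (2*(b:ℝ) + 3) = 2*(n:ℝ) + 3 := by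
      linear_combination (-2 : ℝ) * e2 + 2 * k1 + (5/3) * hs
    have hb : (2*(b:ℝ) + 3) ≠ 0 := by
      have h' : ((2*b + 3 : ℤ):ℝ) ≠ 0 := Int.cast_ne_zero.mpr (by omega)
      push_cast at h'
      convert h' using 2
    refine irr_sqrt3 ⟨(2*(n:ℚ) + 3)/(2*(b:ℚ) + 3), ?_⟩
    push_cast
    rw [div_eq_iff hb]
    linarith
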